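/- Let x₁, x₂, x₃, x₄ ∈ ℝ³ with every three of them linearly independent. A linear functional f with f(xᵢ) > 0 for all i fails to exist if and only if the four determinants det(x₁,x₂,x₃), det(x₁,x₄,x₂), det(x₃,x₂,x₄), det(x₁,x₃,x₄) all have the same sign (all positive or all negative). -/

import Mathlib

private lemma aux1 {p q : ℝ} (hq : 0 < q) (h : 0 < -p * q) : p < 0 := by nlinarith
private lemma aux2 {p q : ℝ} (hq : q < 0) (h : -p * q < 0) : p < 0 := by nlinarith
private lemma aux3 {p q : ℝ} (hp : p < 0) (hq : 0 < q) : 0 < -p * q := by nlinarith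
private lemma aux4 {p q : ℝ} (hp : p < 0) (hq : q < 0) : -p * q < 0 := by nlinarith

noncomputable def det3 (a b c : Fin 3 → ℝ) : ℝ := Matrix.det (Matrix.transpose (Matrix.of ![a, b, c]))

theorem algorithm_four_dets (x : Fin 4 → (Fin 3 → ℝ))
    (hindep : ∀ i j k : Fin 4, i ≠ j → i ≠ k → j ≠ k →
      LinearIndependent ℝ ![x i, x j, x k]) :
    (¬ ∃ f : (Fin 3 → ℝ) →ₗ[ℝ] ℝ, ∀ i, 0 < f (x i)) ↔
    ((0 < det3 (x 0) (x 1) (x 2) ∧ 0 < det3 (x 0) (x 3) (x 1) ∧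
      0 < det3 (x 2) (x 1) (x 3) ∧ 0 < det3 (x 0) (x 2) (x 3)) ∨
     (det3 (x 0) (x 1) (x 2) < 0 ∧ det3 (x 0) (x 3) (x 1) < 0 ∧
      det3 (x 2) (x 1) (x 3) < 0 ∧ det3 (x 0) (x 2) (x 3) < 0)) := by
  have h012 : LinearIndependent ℝ ![x 0, x 1, x 2] :=
    hindep 0 1 2 (by decide) (by decide) (by decide)
  have hcard : Fintype.card (Fin 3) = Module.finrank ℝ (Fin 3 → ℝ) := by
    simp [Module.finrank_fin_fun]
  let B := basisOfLinearIndependentOfCardEqFinrank h012 hcard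
  have hBc : ⇑B = ![x 0, x 1, x 2] :=
    coe_basisOfLinearIndependentOfCardEqFinrank h012 hcard
  have hB0 : B 0 = x 0 := by rw [hBc]; simp
  have hB1 : B 1 = x 1 := by rw [hBc]; simp
  have hB2 : B 2 = x 2 := by rw [hBc]; simp
  set a := B.repr (x 3) 0 with hadef
  set b := B.repr (x 3) 1 with hbdef
  set c := B.repr (x 3) 2 with hcdef
  have hx3 : x 3 = a • x 0 + b • x 1 + c • x 2 := by
    have h := B.sum_repr (x 3)
    rw [Fin.sum_univ_three, hB0, hB1, hB2] at h
    exact h.symm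
  have hcomp : ∀ j : Fin 3, x 3 j = a * x 0 j + b * x 1 j + c * x 2 j := by
    intro j; rw [hx3]; simp
  -- nonvanishing of coefficients
  have hane : a ≠ 0 := by
    intro h0
    have h123 := hindep 1 2 3 (by decide) (by decide) (by decide)
    rw [Fintype.linearIndependent_iff] at h123
    have := h123 ![b, c, -1] (by
      rw [Fin.sum_univ_three]
      simp only [Matrix.cons_val_zero, Matrix.cons_val_one, Matrix.head_cons,
        Matrix.cons_val_two, Matrix.tail_cons]
      rw [hx3, h0]
      module) 2
    change (-1 : ℝ) = 0 at this
    norm_num at this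
  have hbne : b ≠ 0 := by
    intro h0
    have h123 := hindep 0 2 3 (by decide) (by decide) (by decide)
    rw [Fintype.linearIndependent_iff] at h123
    have := h123 ![a, c, -1] (by
      rw [Fin.sum_univ_three]
      simp only [Matrix.cons_val_zero, Matrix.cons_val_one, Matrix.head_cons,
        Matrix.cons_val_two, Matrix.tail_cons]
      rw [hx3, h0]
      module) 2
    change (-1 : ℝ) = 0 at this
    norm_num at this
  have hcne : c ≠ 0 := by
    intro h0
    have h123 := hindep 0 1 3 (by decide) (by decide) (by decide)
    rw [Fintype.linearIndependent_iff] at h123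
    have := h123 ![a, b, -1] (by
      rw [Fin.sum_univ_three]
      simp only [Matrix.cons_val_zero, Matrix.cons_val_one, Matrix.head_cons,
        Matrix.cons_val_two, Matrix.tail_cons]
      rw [hx3, h0]
      module) 2
    change (-1 : ℝ) = 0 at this
    norm_num at this
  -- determinant facts
  have det3_eq : ∀ u v w : Fin 3 → ℝ, det3 u v w =
      u 0 * v 1 * w 2 - u 0 * v 2 * w 1 - u 1 * v 0 * w 2 + u 1 * v 2 * w 0
        + u 2 * v 0 * w 1 - u 2 * v 1 * w 0 := by
    intro u v w
    rw [det3, Matrix.det_transpose, Matrix.det_fin_three]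
    simp [Matrix.of_apply]
    try ring
  have hD : det3 (x 0) (x 1) (x 2) ≠ 0 := by
    have hu : IsUnit (Matrix.of ![x 0, x 1, x 2]) :=
      Matrix.linearIndependent_rows_iff_isUnit.mp h012
    rw [det3, Matrix.det_transpose]
    exact isUnit_iff_ne_zero.mp ((Matrix.isUnit_iff_isUnit_det _).mp hu)
  set D := det3 (x 0) (x 1) (x 2) with hDdef
  have h2 : det3 (x 0) (x 3) (x 1) = -c * D := by
    rw [hDdef, det3_eq, det3_eq, hcomp 0, hcomp 1, hcomp 2]; ring
  have h3 : det3 (x 2) (x 1) (x 3) = -a * D := by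
    rw [hDdef, det3_eq, det3_eq, hcomp 0, hcomp 1, hcomp 2]; ring
  have h4 : det3 (x 0) (x 2) (x 3) = -b * D := by
    rw [hDdef, det3_eq, det3_eq, hcomp 0, hcomp 1, hcomp 2]; ring
  -- construction of functionals
  have exf : ∀ t : Fin 3 → ℝ, (∀ i, 0 < t i) → 0 < a * t 0 + b * t 1 + c * t 2 →
      ∃ f : (Fin 3 → ℝ) →ₗ[ℝ] ℝ, ∀ i, 0 < f (x i) := by
    intro t ht hsum
    refine ⟨B.constr ℝ t, ?_⟩
    have hf0 : (B.constr ℝ t) (x 0) = t 0 := by rw [← hB0]; exact B.constr_basis ℝ t 0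
    have hf1 : (B.constr ℝ t) (x 1) = t 1 := by rw [← hB1]; exact B.constr_basis ℝ t 1
    have hf2 : (B.constr ℝ t) (x 2) = t 2 := by rw [← hB2]; exact B.constr_basis ℝ t 2
    have hf3 : (B.constr ℝ t) (x 3) = a * t 0 + b * t 1 + c * t 2 := by
      rw [hx3]
      simp [map_add, map_smul, hf0, hf1, hf2, smul_eq_mul]
    intro i
    fin_cases i
    · simpa [hf0] using ht 0
    · simpa [hf1] using ht 1
    · simpa [hf2] using ht 2
    · simpa [hf3] using hsum
  have main : (¬ ∃ f : (Fin 3 → ℝ) →ₗ[ℝ] ℝ, ∀ i, 0 < f (x i)) ↔ (a < 0 ∧ b < 0 ∧ c < 0) := by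
    constructor
    · intro hne
      by_contra hnot
      apply hne
      have : 0 < a ∨ 0 < b ∨ 0 < c := by
        rcases hane.lt_or_gt with h | h
        · rcases hbne.lt_or_gt with h' | h'
          · rcases hcne.lt_or_gt with h'' | h''
            · exact absurd ⟨h, h', h''⟩ hnot
            · exact Or.inr (Or.inr h'')
          · exact Or.inr (Or.inl h')
        · exact Or.inl h
      rcases this with h | h | h
      · refine exf ![(1 + |b| + |c|) / a, 1, 1] ?_ ?_
        · intro i; fin_cases i <;> simp <;> positivity
        · have : a * ((1 + |b| + |c|) / a) = 1 + |b| + |c| := by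
            field_simp
          simp only [Matrix.cons_val_zero, Matrix.cons_val_one, Matrix.head_cons,
            Matrix.cons_val_two, Matrix.tail_cons]
          rw [this]
          nlinarith [le_abs_self b, le_abs_self c, neg_abs_le b, neg_abs_le c]
      · refine exf ![1, (1 + |a| + |c|) / b, 1] ?_ ?_
        · intro i; fin_cases i <;> simp <;> positivity
        · have : b * ((1 + |a| + |c|) / b) = 1 + |a| + |c| := by
            field_simp
          simp only [Matrix.cons_val_zero, Matrix.cons_val_one, Matrix.head_cons,
            Matrix.cons_val_two, Matrix.tail_cons]
          rw [this]
          nlinarith [le_abs_self a, le_abs_self c, neg_abs_le a, neg_abs_le c]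
      · refine exf ![1, 1, (1 + |a| + |b|) / c] ?_ ?_
        · intro i; fin_cases i <;> simp <;> positivity
        · have : c * ((1 + |a| + |b|) / c) = 1 + |a| + |b| := by
            field_simp
          simp only [Matrix.cons_val_zero, Matrix.cons_val_one, Matrix.head_cons,
            Matrix.cons_val_two, Matrix.tail_cons]
          rw [this]
          nlinarith [le_abs_self a, le_abs_self b, neg_abs_le a, neg_abs_le b]
    · rintro ⟨ha, hb, hc⟩ ⟨f, hf⟩
      have hval : f (x 3) = a * f (x 0) + b * f (x 1) + c * f (x 2) := by
        rw [hx3]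
        simp [map_add, map_smul, smul_eq_mul]
      have h0 := hf 0
      have h1 := hf 1
      have h2' := hf 2
      have h3' := hf 3
      nlinarith [mul_pos (neg_pos.mpr ha) h0, mul_pos (neg_pos.mpr hb) h1,
        mul_pos (neg_pos.mpr hc) h2']
  rw [main, h2, h3, h4]
  rcases hD.lt_or_gt with h | h
  · constructor
    · rintro ⟨ha, hb, hc⟩
      exact Or.inr ⟨h, aux4 hc h, aux4 ha h, aux4 hb h⟩
    · rintro (⟨h1, _, _, _⟩ | ⟨h1, hh2, hh3, hh4⟩)
      · linarith
      · exact ⟨aux2 h1 hh3, aux2 h1 hh4, aux2 h1 hh2⟩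
  · constructor
    · rintro ⟨ha, hb, hc⟩
      exact Or.inl ⟨h, aux3 hc h, aux3 ha h, aux3 hb h⟩
    · rintro (⟨h1, hh2, hh3, hh4⟩ | ⟨h1, _, _, _⟩)
      · exact ⟨aux1 h1 hh3, aux1 h1 hh4, aux1 h1 hh2⟩
      · linarith
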